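/- Let Z(x,y) = x + i·exp(-y⁻²) for (x,y) ∈ (-1,1) × (0,1), and let f(x,y) = Z(x,y)^{-1/4} using the branch of z ↦ z^{1/4} that is positive on the positive real axis (well-defined since Im Z > 0). Then ∫_{-1}^{1} |f(x,y)| dx ≤ C uniformly in y ∈ (0,1), and yet |f(0,y)| = exp(y⁻²/4), so f is not of tempered growth as y → 0⁺. -/

import Mathlib

open Real

lemma norm_aux (x : ℝ) (E : ℝ) (hE : 0 < E) :
    ‖((x : ℂ) + Complex.I * E) ^ (-(1/4) : ℂ)‖
      = ‖(x : ℂ) + Complex.I * E‖ ^ (-(1/4) : ℝ) := by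
  have hz : ((x : ℂ) + Complex.I * E) ≠ 0 := by
    intro h
    have : ((x : ℂ) + Complex.I * E).im = 0 := by rw [h]; simp
    simp [Complex.add_im] at this
    exact hE.ne' this
  rw [show ‖((x : ℂ) + Complex.I * E) ^ (-(1/4) : ℂ)‖
      = ‖((x : ℂ) + Complex.I * E) ^ (-(1/4) : ℂ)‖ from rfl,
    Complex.norm_cpow_of_ne_zero hz]
  norm_num

lemma abs_aux (x E : ℝ) :
    ‖(x : ℂ) + Complex.I * (E : ℝ)‖ = Real.sqrt (x ^ 2 + E ^ 2) := by
  rw [Complex.norm_def, Complex.normSq_apply]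
  simp only [Complex.add_re, Complex.add_im, Complex.mul_re, Complex.mul_im,
    Complex.I_re, Complex.I_im, Complex.ofReal_re, Complex.ofReal_im]
  ring_nf

lemma re_aux (x E : ℝ) : ((x : ℂ) + Complex.I * (E : ℝ)).re = x := by
  simp only [Complex.add_re, Complex.mul_re, Complex.I_re, Complex.I_im,
    Complex.ofReal_re, Complex.ofReal_im]
  ring

lemma im_aux (x : ℝ) (E : ℝ) : ((x : ℂ) + Complex.I * E).im = E := by simp

/-- For `Z(x,y) = x + i·exp(-y⁻²)` on `(-1,1) × (0,1)` and
`f(x,y) = Z(x,y)^(-1/4)` (principal branch, positive on the positive real axis), the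
integrals `∫_{-1}^1 |f(x,y)| dx` are bounded uniformly in `y ∈ (0,1)`, yet
`|f(0,y)| = exp(y⁻²/4)`, so `f` is not of tempered growth as `y → 0⁺`. -/
theorem example_one_one
    (Z : ℝ → ℝ → ℂ) (hZ : ∀ x y, Z x y = (x : ℂ) + Complex.I * Real.exp (-(y⁻¹ ^ 2)))
    (f : ℝ → ℝ → ℂ) (hf : ∀ x y, f x y = Z x y ^ (-(1/4) : ℂ)) :
    (∃ C : ℝ, ∀ y ∈ Set.Ioo (0:ℝ) 1, (∫ x in (-1:ℝ)..1, ‖f x y‖) ≤ C) ∧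
    (∀ y ∈ Set.Ioo (0:ℝ) 1, ‖f 0 y‖ = Real.exp (y⁻¹ ^ 2 / 4)) ∧
    (∀ (N : ℕ) (C : ℝ), ∃ y ∈ Set.Ioo (0:ℝ) 1, C * y ^ (-(N:ℝ)) < ‖f 0 y‖) := by
  -- norm formula
  have hnorm : ∀ x y : ℝ, ‖f x y‖ = ‖Z x y‖ ^ (-(1/4) : ℝ) := by
    intro x y
    rw [hf, hZ]
    exact norm_aux x _ (Real.exp_pos _)
  -- value at x = 0
  have hval : ∀ y : ℝ, ‖f 0 y‖ = Real.exp (y⁻¹ ^ 2 / 4) := by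
    intro y
    rw [hnorm, hZ]
    have : ‖((0:ℝ) : ℂ) + Complex.I * (Real.exp (-(y⁻¹ ^ 2)) : ℝ)‖
        = Real.exp (-(y⁻¹ ^ 2)) := by
      rw [abs_aux]
      norm_num
      rw [Real.sqrt_sq (Real.exp_pos _).le]
    rw [this, ← Real.exp_mul]
    congr 1
    ring
  refine ⟨?_, fun y _ => hval y, ?_⟩
  · -- uniform bound
    refine ⟨∫ x in (-1:ℝ)..1, |x| ^ (-(1/4) : ℝ), fun y hy => ?_⟩
    have hE : (0:ℝ) < Real.exp (-(y⁻¹ ^ 2)) := Real.exp_pos _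
    -- integrability of ‖f · y‖ : continuity
    have hcont : Continuous fun x : ℝ => ‖f x y‖ := by
      have : Continuous fun x : ℝ => ((x : ℂ) + Complex.I * Real.exp (-(y⁻¹ ^ 2))) := by
        continuity
      have hc : Continuous fun x : ℝ =>
          ((x : ℂ) + Complex.I * Real.exp (-(y⁻¹ ^ 2))) ^ (-(1/4) : ℂ) := by
        refine this.cpow continuous_const fun a => ?_
        right
        rw [im_aux]
        exact hE.ne'
      have : (fun x : ℝ => ‖f x y‖)
          = fun x : ℝ => ‖((x : ℂ) + Complex.I * Real.exp (-(y⁻¹ ^ 2))) ^ (-(1/4) : ℂ)‖ := by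
        funext x; rw [hf, hZ]
      rw [this]
      exact hc.norm
    have hint1 : IntervalIntegrable (fun x : ℝ => ‖f x y‖) MeasureTheory.volume (-1) 1 :=
      hcont.intervalIntegrable _ _
    -- integrability of |x|^(-1/4)
    have hint2 : IntervalIntegrable (fun x : ℝ => |x| ^ (-(1/4) : ℝ))
        MeasureTheory.volume (-1) 1 := by
      have h01 : IntervalIntegrable (fun x : ℝ => |x| ^ (-(1/4) : ℝ))
          MeasureTheory.volume 0 1 := by
        rw [intervalIntegrable_iff, Set.uIoc_of_le (by norm_num : (0:ℝ) ≤ 1)]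
        have base := intervalIntegrable_iff.mp
          (intervalIntegral.intervalIntegrable_rpow' (by norm_num : (-1:ℝ) < -(1/4))
            (a := 0) (b := 1))
        rw [Set.uIoc_of_le (by norm_num : (0:ℝ) ≤ 1)] at base
        refine base.congr_fun ?_ measurableSet_Ioc
        intro x hx
        simp only []
        rw [abs_of_pos hx.1]
      have hneg : IntervalIntegrable (fun x : ℝ => |x| ^ (-(1/4) : ℝ))
          MeasureTheory.volume (-1) 0 := by
        have := ((IntervalIntegrable.iff_comp_neg).mp h01)
        simpa using this.symm
      exact hneg.trans h01
    refine intervalIntegral.integral_mono_ae (by norm_num) hint1 hint2 ?_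
    have hzero : {(0:ℝ)}ᶜ ∈ (MeasureTheory.ae (MeasureTheory.volume : MeasureTheory.Measure ℝ)) := by
      rw [MeasureTheory.mem_ae_iff]
      simp
    filter_upwards [hzero] with x hx
    have hx0 : x ≠ 0 := by simpa using hx
    have habs : |x| ≤ ‖Z x y‖ := by
      rw [hZ]
      have h1 := Complex.abs_re_le_norm ((x : ℂ) + Complex.I * (Real.exp (-(y⁻¹ ^ 2)) : ℝ))
      rwa [re_aux] at h1
    rw [hnorm]
    exact Real.rpow_le_rpow_of_nonpos (abs_pos.mpr hx0) habs (by norm_num)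
  · -- not tempered
    intro N C
    have h := tendsto_exp_mul_div_rpow_atTop (N : ℝ) (1/4) (by norm_num)
    have h2 : ∀ᶠ t : ℝ in Filter.atTop, max C 0 < Real.exp (1/4 * t) / t ^ (N : ℝ) :=
      h.eventually_gt_atTop _
    obtain ⟨t, ht, ht1⟩ := (h2.and (Filter.eventually_ge_atTop 2)).exists
    set y := t⁻¹ with hy
    have ht0 : (0:ℝ) < t := by linarith
    have hy0 : 0 < y := by positivity
    have hy1 : y < 1 := by
      rw [hy]
      rw [inv_lt_one_iff₀]; right; linarith
    refine ⟨y, ⟨hy0, hy1⟩, ?_⟩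
    rw [hval]
    have hyinv : y⁻¹ = t := by rw [hy, inv_inv]
    rw [hyinv]
    have hpow : y ^ (-(N:ℝ)) = t ^ (N:ℝ) := by
      rw [hy, ← Real.rpow_neg_one t, ← Real.rpow_mul ht0.le]
      norm_num
    rw [hpow]
    have htN : (0:ℝ) < t ^ (N:ℝ) := Real.rpow_pos_of_pos ht0 _
    have : C < Real.exp (1/4 * t) / t ^ (N:ℝ) := lt_of_le_of_lt (le_max_left C 0) ht
    have hlt : C * t ^ (N:ℝ) < Real.exp (1/4 * t) := by
      rw [lt_div_iff₀ htN] at this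
      exact this
    have hexp : Real.exp (1/4 * t) ≤ Real.exp (t ^ 2 / 4) := by
      apply Real.exp_le_exp.mpr
      nlinarith
    calc C * t ^ (N:ℝ) < Real.exp (1/4 * t) := hlt
      _ ≤ Real.exp (t ^ 2 / 4) := hexp
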